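/- arXiv:1407.0668 — 3 statements merged into one kernel-verified Lean document; each statement's English description precedes it below -/
import Mathlib

section
/- Let n ≥ 2, λ ∈ ℤ^n with λ₁ ≥ λ₂ ≥ … ≥ λₙ ≥ 0, and (ν, μ) ∈ τ_{Bₙ}(λ). Then there exists exactly one pair (t, i) where t is a nondecreasing finite list with entries in {1, …, n} and i is a nonincreasing finite list with entries in {1, …, n−1}, such that νⱼ = λⱼ − (the number of entries of t equal to j) for every j with 1 ≤ j ≤ n, and μⱼ = νⱼ + (the number of entries of i equal to j−1) for every j with 2 ≤ j ≤ n. In other words, every element of τ_{Bₙ}(λ) is realized by a unique λ-admissible composite ξ_{−t^ℓ,+i^m} of the lattice lowering maps ξ_{−j} (subtract 1 from coordinate j) and raising maps ξ_{+j} (add 1 to coordinate j+1). -/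
def blocksB (c : ℕ → ℕ) : ℕ → List ℕ
  | 0 => []
  | n+1 => blocksB c n ++ List.replicate (c (n+1)) (n+1)

lemma blocksB_mem (c : ℕ → ℕ) (n : ℕ) : ∀ x ∈ blocksB c n, 1 ≤ x ∧ x ≤ n := by
  induction n with
  | zero => simp [blocksB]
  | succ n ih =>
    intro x hx
    simp only [blocksB, List.mem_append, List.mem_replicate] at hx
    rcases hx with h | h
    · exact ⟨(ih x h).1, le_trans (ih x h).2 (Nat.le_succ n)⟩
    · omega

lemma blocksB_sorted (c : ℕ → ℕ) (n : ℕ) : (blocksB c n).Pairwise (· ≤ ·) := by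
  induction n with
  | zero => simp [blocksB]
  | succ n ih =>
    rw [blocksB.eq_2]
    refine List.pairwise_append.2 ⟨ih, ?_, ?_⟩
    · exact List.pairwise_replicate.2 (Or.inr le_rfl)
    · intro x hx y hy
      have := blocksB_mem c n x hx
      have := List.eq_of_mem_replicate hy
      omega

lemma blocksB_count (c : ℕ → ℕ) (n x : ℕ) :
    (blocksB c n).count x = if 1 ≤ x ∧ x ≤ n then c x else 0 := by
  induction n with
  | zero => rw [if_neg (by omega)]; simp [blocksB]
  | succ n ih =>
    rw [blocksB, List.count_append, ih, List.count_replicate]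
    by_cases h : n + 1 = x
    · subst h; simp only [beq_self_eq_true, if_true]
      rw [if_neg (by omega), if_pos (by omega)]; simp
    · simp only [beq_iff_eq, if_neg h]
      split_ifs <;> omega




/-- Unambiguity of the notation ξ_{(μ,ν)} in type Bₙ: every (ν, μ) ∈ τ_{Bₙ}(λ)
is realized by a unique pair (t, i) of a nondecreasing list t with entries in
{1, …, n} and a nonincreasing list i with entries in {1, …, n−1} such that
νⱼ = λⱼ − #{entries of t equal to j} (1 ≤ j ≤ n) and
μⱼ = νⱼ + #{entries of i equal to j−1} (2 ≤ j ≤ n). -/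
theorem stmt_9 (n : ℕ) (hn : 2 ≤ n) (l ν μ : ℕ → ℤ)
    (hdom : ∀ j, 1 ≤ j → j ≤ n - 1 → l (j + 1) ≤ l j) (hpos : 0 ≤ l n)
    (h1 : ∀ j, 1 ≤ j → j ≤ n → ν j ≤ l j)
    (h2 : ∀ j, 1 ≤ j → j ≤ n - 1 → l (j + 1) ≤ ν j)
    (h3 : - l n ≤ ν n)
    (h4 : ∀ j, 2 ≤ j → j ≤ n → μ j ≤ ν (j - 1))
    (h5 : ∀ j, 2 ≤ j → j ≤ n → ν j ≤ μ j)
    (h6 : - μ n ≤ ν n) :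
    ∃! p : List ℕ × List ℕ,
      List.Pairwise (· ≤ ·) p.1 ∧ (∀ x ∈ p.1, 1 ≤ x ∧ x ≤ n) ∧
      List.Pairwise (· ≥ ·) p.2 ∧ (∀ x ∈ p.2, 1 ≤ x ∧ x ≤ n - 1) ∧
      (∀ j, 1 ≤ j → j ≤ n → ν j = l j - (p.1.count j : ℤ)) ∧
      (∀ j, 2 ≤ j → j ≤ n → μ j = ν j + (p.2.count (j - 1) : ℤ)) := by
  set c : ℕ → ℕ := fun j => (l j - ν j).toNat with hc
  set d : ℕ → ℕ := fun j => (μ (j+1) - ν (j+1)).toNat with hd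
  have hcc : ∀ j, 1 ≤ j → j ≤ n → ((c j : ℤ)) = l j - ν j := by
    intro j hj1 hj2
    have := h1 j hj1 hj2
    simp only [hc]
    omega
  have hdd : ∀ j, 1 ≤ j → j ≤ n - 1 → ((d j : ℤ)) = μ (j+1) - ν (j+1) := by
    intro j hj1 hj2
    have := h5 (j+1) (by omega) (by omega)
    simp only [hd]
    omega
  refine ⟨(blocksB c n, (blocksB d (n-1)).reverse), ⟨?_, ?_, ?_, ?_, ?_, ?_⟩, ?_⟩
  · exact blocksB_sorted c n
  · exact blocksB_mem c n
  · rw [List.pairwise_reverse]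
    exact blocksB_sorted d (n-1)
  · intro x hx
    exact blocksB_mem d (n-1) x (List.mem_reverse.1 hx)
  · intro j hj1 hj2
    rw [blocksB_count, if_pos ⟨hj1, hj2⟩, hcc j hj1 hj2]; ring
  · intro j hj1 hj2
    rw [List.count_reverse, blocksB_count, if_pos (by omega : 1 ≤ j - 1 ∧ j - 1 ≤ n - 1),
      hdd (j-1) (by omega) (by omega)]
    have hj : j - 1 + 1 = j := by omega
    rw [hj]; ring
  · rintro ⟨t, i⟩ ⟨ht1, ht2, hi1, hi2, heq1, heq2⟩
    simp only at ht1 ht2 hi1 hi2 heq1 heq2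
    have htc : ∀ x, t.count x = (blocksB c n).count x := by
      intro x
      rw [blocksB_count]
      by_cases hx : 1 ≤ x ∧ x ≤ n
      · rw [if_pos hx]
        have e1 := heq1 x hx.1 hx.2
        have e2 := hcc x hx.1 hx.2
        have : ((t.count x : ℤ)) = (c x : ℤ) := by omega
        exact_mod_cast this
      · rw [if_neg hx]
        exact List.count_eq_zero_of_not_mem (fun hmem => hx (ht2 x hmem))
    have hic : ∀ x, i.count x = ((blocksB d (n-1)).reverse).count x := by
      intro x
      rw [List.count_reverse, blocksB_count]
      by_cases hx : 1 ≤ x ∧ x ≤ n - 1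
      · rw [if_pos hx]
        have e1 := heq2 (x+1) (by omega) (by omega)
        have e2 := hdd x hx.1 hx.2
        have hx1 : x + 1 - 1 = x := by omega
        rw [hx1] at e1
        have : ((i.count x : ℤ)) = (d x : ℤ) := by omega
        exact_mod_cast this
      · rw [if_neg hx]
        exact List.count_eq_zero_of_not_mem (fun hmem => hx (hi2 x hmem))
    have hperm1 : List.Perm t (blocksB c n) := List.perm_iff_count.2 htc
    have hperm2 : List.Perm i ((blocksB d (n-1)).reverse) := List.perm_iff_count.2 hic
    have hs3 : List.Pairwise (· ≥ ·) ((blocksB d (n-1)).reverse) := by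
      rw [List.pairwise_reverse]
      exact blocksB_sorted d (n-1)
    have : IsAntisymm ℕ (· ≥ ·) := ⟨fun a b hab hba => le_antisymm hba hab⟩
    simp only [Prod.mk.injEq]
    exact ⟨List.Perm.eq_of_pairwise' ht1 (blocksB_sorted c n) hperm1,
      List.Perm.eq_of_pairwise' hi1 hs3 hperm2⟩
end

section
/- Let n ≥ 2, λ ∈ ℤ^n with λ₁ ≥ λ₂ ≥ … ≥ λ_{n−1} ≥ |λₙ|, and (ν, μ) ∈ τ_{Dₙ}(λ). Then there exists exactly one pair (i, t) where i is a nondecreasing finite list with entries in {1, …, n−1} and t is a nonincreasing finite list with entries in {2, …, n}, such that νⱼ = λⱼ + (the number of entries of i equal to j−1) for every j with 2 ≤ j ≤ n, and μⱼ = νⱼ − (the number of entries of t equal to j) for every j with 2 ≤ j ≤ n. In other words, every element of τ_{Dₙ}(λ) is realized by a unique λ-admissible composite ξ_{+i^m,−t^ℓ} of the lattice raising maps ξ_{+j} (add 1 to coordinate j+1) and lowering maps ξ_{−j} (subtract 1 from coordinate j). -/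
/-- Helper: count of x in a sum of replicates over `Finset.Icc 2 n`, where the
value placed for index `j` is `f j`, and `f` is injective on the range. -/
lemma count_sum_replicate (n : ℕ) (c : ℕ → ℕ) (f : ℕ → ℕ)
    (hf : ∀ j j', j ∈ Finset.Icc 2 n → j' ∈ Finset.Icc 2 n → f j = f j' → j = j')
    (j : ℕ) (hj : j ∈ Finset.Icc 2 n) :
    Multiset.count (f j) (∑ j' ∈ Finset.Icc 2 n, Multiset.replicate (c j') (f j')) = c j := by
  rw [Multiset.count_sum']
  rw [Finset.sum_eq_single_of_mem j hj]
  · simp [Multiset.count_replicate]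
  · intro b hb hbj
    rw [Multiset.count_replicate, if_neg]
    intro h
    exact hbj (hf b j hb hj h)

/-- Unambiguity of the notation ξ_{(μ,ν)} in type Dₙ: every (ν, μ) ∈ τ_{Dₙ}(λ)
is realized by a unique pair (i, t) of a nondecreasing list i with entries in
{1, …, n−1} and a nonincreasing list t with entries in {2, …, n} such that
νⱼ = λⱼ + #{entries of i equal to j−1} (2 ≤ j ≤ n) and
μⱼ = νⱼ − #{entries of t equal to j} (2 ≤ j ≤ n). -/
theorem stmt_10 (n : ℕ) (hn : 2 ≤ n) (l ν μ : ℕ → ℤ)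
    (hdom : ∀ j, 1 ≤ j → j ≤ n - 2 → l (j + 1) ≤ l j) (hlast : |l n| ≤ l (n - 1))
    (h1 : ν 2 ≤ l 1)
    (h2 : ∀ j, 2 ≤ j → j ≤ n - 1 → l j ≤ ν j)
    (h3 : ∀ j, 2 ≤ j → j ≤ n - 1 → ν (j + 1) ≤ l j)
    (h4 : |l n| ≤ ν n)
    (h5 : ∀ j, 2 ≤ j → j ≤ n - 1 → μ j ≤ ν j)
    (h6 : ∀ j, 2 ≤ j → j ≤ n - 1 → ν (j + 1) ≤ μ j)
    (h7 : |μ n| ≤ ν n) :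
    ∃! p : List ℕ × List ℕ,
      List.Pairwise (· ≤ ·) p.1 ∧ (∀ x ∈ p.1, 1 ≤ x ∧ x ≤ n - 1) ∧
      List.Pairwise (· ≥ ·) p.2 ∧ (∀ x ∈ p.2, 2 ≤ x ∧ x ≤ n) ∧
      (∀ j, 2 ≤ j → j ≤ n → ν j = l j + (p.1.count (j - 1) : ℤ)) ∧
      (∀ j, 2 ≤ j → j ≤ n → μ j = ν j - (p.2.count j : ℤ)) := by
  have hνl : ∀ j, 2 ≤ j → j ≤ n → l j ≤ ν j := by
    intro j h2j hjn
    rcases eq_or_lt_of_le hjn with rfl | hlt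
    · exact le_trans (le_abs_self _) h4
    · exact h2 j h2j (by omega)
  have hμν : ∀ j, 2 ≤ j → j ≤ n → μ j ≤ ν j := by
    intro j h2j hjn
    rcases eq_or_lt_of_le hjn with rfl | hlt
    · exact le_trans (le_abs_self _) h7
    · exact h5 j h2j (by omega)
  set Mi : Multiset ℕ :=
    ∑ j ∈ Finset.Icc 2 n, Multiset.replicate (ν j - l j).toNat (j - 1) with hMi
  set Mt : Multiset ℕ :=
    ∑ j ∈ Finset.Icc 2 n, Multiset.replicate (ν j - μ j).toNat j with hMt
  have hMic : ∀ j, 2 ≤ j → j ≤ n → Mi.count (j - 1) = (ν j - l j).toNat := by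
    intro j h2j hjn
    exact count_sum_replicate n _ (· - 1)
      (fun a b ha hb hab => by
        simp only [Finset.mem_Icc] at ha hb
        omega)
      j (Finset.mem_Icc.mpr ⟨h2j, hjn⟩)
  have hMtc : ∀ j, 2 ≤ j → j ≤ n → Mt.count j = (ν j - μ j).toNat := by
    intro j h2j hjn
    exact count_sum_replicate n _ id (fun a b _ _ hab => hab)
      j (Finset.mem_Icc.mpr ⟨h2j, hjn⟩)
  have hMimem : ∀ x ∈ Mi, 1 ≤ x ∧ x ≤ n - 1 := by
    intro x hx
    rw [hMi, Multiset.mem_sum] at hx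
    obtain ⟨j, hj, hxj⟩ := hx
    rw [Multiset.eq_of_mem_replicate hxj]
    simp only [Finset.mem_Icc] at hj
    omega
  have hMtmem : ∀ x ∈ Mt, 2 ≤ x ∧ x ≤ n := by
    intro x hx
    rw [hMt, Multiset.mem_sum] at hx
    obtain ⟨j, hj, hxj⟩ := hx
    rw [Multiset.eq_of_mem_replicate hxj]
    simpa using hj
  refine ⟨(Mi.sort (· ≤ ·), Mt.sort (· ≥ ·)), ⟨?_, ?_, ?_, ?_, ?_, ?_⟩, ?_⟩
  · exact Multiset.pairwise_sort _ _
  · intro x hx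
    exact hMimem x (by rwa [← Multiset.mem_sort (α := ℕ) (· ≤ ·)])
  · exact Multiset.pairwise_sort _ _
  · intro x hx
    exact hMtmem x (by rwa [← Multiset.mem_sort (α := ℕ) (· ≥ ·)])
  · intro j h2j hjn
    have : (Mi.sort (· ≤ ·)).count (j - 1) = Mi.count (j - 1) := by
      rw [← Multiset.coe_count, Multiset.sort_eq]
    rw [this, hMic j h2j hjn]
    have := hνl j h2j hjn
    omega
  · intro j h2j hjn
    have : (Mt.sort (· ≥ ·)).count j = Mt.count j := by
      rw [← Multiset.coe_count, Multiset.sort_eq]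
    rw [this, hMtc j h2j hjn]
    have := hμν j h2j hjn
    omega
  · rintro ⟨q1, q2⟩ ⟨hs1, hb1, hs2, hb2, hc1, hc2⟩
    have hq1 : q1 = Mi.sort (· ≤ ·) := by
      apply List.Perm.eq_of_pairwise' hs1 (Multiset.pairwise_sort _ _)
      rw [List.perm_iff_count]
      intro x
      have hsortc : (Mi.sort (· ≤ ·)).count x = Mi.count x := by
        rw [← Multiset.coe_count, Multiset.sort_eq]
      by_cases hx : 1 ≤ x ∧ x ≤ n - 1
      · have hj2 : 2 ≤ x + 1 := by omega
        have hjn : x + 1 ≤ n := by omega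
        have h := hc1 (x + 1) hj2 hjn
        simp only [Nat.add_sub_cancel] at h
        have := hνl (x + 1) hj2 hjn
        have hMc := hMic (x + 1) hj2 hjn
        simp only [Nat.add_sub_cancel] at hMc
        have hMz : (Mi.count x : ℤ) = ν (x + 1) - l (x + 1) := by
          rw [hMc, Int.toNat_of_nonneg (by omega)]
        rw [hsortc]
        have hz : ((q1, q2).1.count x : ℤ) = (Mi.count x : ℤ) := by linarith
        exact_mod_cast hz
      · rw [hsortc]
        rw [List.count_eq_zero.mpr (fun hm => hx (hb1 x hm)),
          Multiset.count_eq_zero.mpr (fun hm => hx (hMimem x hm))]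
    have hq2 : q2 = Mt.sort (· ≥ ·) := by
      apply List.Perm.eq_of_pairwise' hs2 (Multiset.pairwise_sort _ _)
      rw [List.perm_iff_count]
      intro x
      have hsortc : (Mt.sort (· ≥ ·)).count x = Mt.count x := by
        rw [← Multiset.coe_count, Multiset.sort_eq]
      by_cases hx : 2 ≤ x ∧ x ≤ n
      · have h := hc2 x hx.1 hx.2
        have := hμν x hx.1 hx.2
        have hMz : (Mt.count x : ℤ) = ν x - μ x := by
          rw [hMtc x hx.1 hx.2, Int.toNat_of_nonneg (by omega)]
        rw [hsortc]
        have hz : ((q1, q2).2.count x : ℤ) = (Mt.count x : ℤ) := by linarith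
        exact_mod_cast hz
      · rw [hsortc]
        rw [List.count_eq_zero.mpr (fun hm => hx (hb2 x hm)),
          Multiset.count_eq_zero.mpr (fun hm => hx (hMtmem x hm))]
    simp [hq1, hq2]
end

section
/- Let n ≥ 2, λ ∈ ℤ^n with λ₁ ≥ λ₂ ≥ … ≥ λₙ ≥ 0, and (ν, μ) ∈ τ_{Cₙ}(λ). Then there exists exactly one triple (c, t, i) where c ∈ ℤ with 0 ≤ c ≤ λ₁ − λ₂ and ν₁ = λ₁ − c, t is a nondecreasing finite list with entries in {2, …, n} such that νⱼ = λⱼ − (the number of entries of t equal to j) for every j with 2 ≤ j ≤ n, and i is a nonincreasing finite list with entries in {1, …, n−1} such that μⱼ = νⱼ + (the number of entries of i equal to j−1) for every j with 2 ≤ j ≤ n. In other words, every λ-admissible map of type Cₙ factors uniquely as ξ_{−t^{ℓ−c},+i^m} ∘ ξ_{−1}^c with ξ_{−t^{ℓ−c},+i^m} λc-admissible, where ξ_{−1} subtracts 1 from the first coordinate. -/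
private def rep (c : ℕ → ℕ) (s k : ℕ) : List ℕ :=
  (List.range' s k).flatMap fun j => List.replicate (c j) j

private lemma rep_mem {c : ℕ → ℕ} {s k x : ℕ} (hx : x ∈ rep c s k) :
    s ≤ x ∧ x < s + k := by
  rw [rep, List.mem_flatMap] at hx
  obtain ⟨j, hj, hxj⟩ := hx
  rw [List.eq_of_mem_replicate hxj]
  simpa using List.mem_range'_1.mp hj

private lemma rep_sorted (c : ℕ → ℕ) (s k : ℕ) : (rep c s k).Pairwise (· ≤ ·) := by
  induction k generalizing s with
  | zero => simp [rep]
  | succ k ih =>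
    rw [rep, List.range'_succ, List.flatMap_cons]
    rw [List.pairwise_append]
    refine ⟨List.pairwise_replicate.2 (Or.inr le_rfl), ih (s+1), ?_⟩
    intro a ha b hb
    rw [List.eq_of_mem_replicate ha]
    have := rep_mem (c := c) (s := s+1) (k := k) hb
    omega

private lemma rep_count (c : ℕ → ℕ) (s k j : ℕ) :
    (rep c s k).count j = if s ≤ j ∧ j < s + k then c j else 0 := by
  induction k generalizing s with
  | zero => simp [rep]
  | succ k ih =>
    rw [rep, List.range'_succ, List.flatMap_cons, List.count_append,
      List.count_replicate]
    rw [show (List.range' (s+1) k).flatMap (fun j => List.replicate (c j) j) = rep c (s+1) k from rfl, ih]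
    simp only [beq_iff_eq]
    by_cases h : s = j
    · subst h; rw [if_pos rfl, if_neg (by omega), if_pos (by omega)]; omega
    · rw [if_neg h]; split <;> split <;> omega

/-- Unique factorization of λ-admissible maps in type Cₙ: every (ν, μ) ∈ τ_{Cₙ}(λ)
is realized by a unique triple (c, t, i) with 0 ≤ c ≤ λ₁ − λ₂ and ν₁ = λ₁ − c,
t a nondecreasing list with entries in {2, …, n} such that
νⱼ = λⱼ − #{entries of t equal to j} (2 ≤ j ≤ n), and
i a nonincreasing list with entries in {1, …, n−1} such that
μⱼ = νⱼ + #{entries of i equal to j−1} (2 ≤ j ≤ n). -/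
theorem stmt_11 (n : ℕ) (hn : 2 ≤ n) (l ν μ : ℕ → ℤ)
    (hdom : ∀ j, 1 ≤ j → j ≤ n - 1 → l (j + 1) ≤ l j) (hpos : 0 ≤ l n)
    (h1 : ∀ j, 1 ≤ j → j ≤ n → ν j ≤ l j)
    (h2 : ∀ j, 1 ≤ j → j ≤ n - 1 → l (j + 1) ≤ ν j)
    (h3 : 0 ≤ ν n)
    (h4 : ∀ j, 2 ≤ j → j ≤ n → μ j ≤ ν (j - 1))
    (h5 : ∀ j, 2 ≤ j → j ≤ n → ν j ≤ μ j) :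
    ∃! q : ℤ × List ℕ × List ℕ,
      (0 ≤ q.1 ∧ q.1 ≤ l 1 - l 2 ∧ ν 1 = l 1 - q.1) ∧
      (List.Pairwise (· ≤ ·) q.2.1 ∧ (∀ x ∈ q.2.1, 2 ≤ x ∧ x ≤ n) ∧
        ∀ j, 2 ≤ j → j ≤ n → ν j = l j - (q.2.1.count j : ℤ)) ∧
      (List.Pairwise (· ≥ ·) q.2.2 ∧ (∀ x ∈ q.2.2, 1 ≤ x ∧ x ≤ n - 1) ∧
        ∀ j, 2 ≤ j → j ≤ n → μ j = ν j + (q.2.2.count (j - 1) : ℤ)) := by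
  -- counts
  set a : ℕ → ℕ := fun j => (l j - ν j).toNat with ha
  set b : ℕ → ℕ := fun j => (μ (j+1) - ν (j+1)).toNat with hb
  have hacast : ∀ j, 2 ≤ j → j ≤ n → ((a j : ℤ)) = l j - ν j := by
    intro j hj2 hjn
    exact Int.toNat_of_nonneg (by have := h1 j (by omega) hjn; omega)
  have hbcast : ∀ j, 1 ≤ j → j + 1 ≤ n → ((b j : ℤ)) = μ (j+1) - ν (j+1) := by
    intro j hj1 hjn
    exact Int.toNat_of_nonneg (by have := h5 (j+1) (by omega) hjn; omega)
  refine ⟨⟨l 1 - ν 1, rep a 2 (n - 1), (rep b 1 (n - 1)).reverse⟩, ⟨?_, ?_, ?_⟩, ?_⟩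
  · refine ⟨?_, ?_, by ring⟩
    · have := h1 1 le_rfl (by omega); simpa using this
    · have h2' : l 2 ≤ ν 1 := by simpa using h2 1 le_rfl (by omega)
      simp; omega
  · refine ⟨rep_sorted a 2 (n-1), ?_, ?_⟩
    · intro x hx; have := rep_mem hx; omega
    · intro j hj2 hjn
      rw [rep_count]
      rw [if_pos (by omega)]
      rw [hacast j hj2 hjn]; ring
  · refine ⟨?_, ?_, ?_⟩
    · rw [List.pairwise_reverse]
      exact rep_sorted b 1 (n-1)
    · intro x hx; rw [List.mem_reverse] at hx; have := rep_mem hx; omega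
    · intro j hj2 hjn
      rw [List.count_reverse, rep_count, if_pos (by omega)]
      have : j - 1 + 1 = j := by omega
      rw [hbcast (j-1) (by omega) (by omega), this]; ring
  · rintro ⟨c, t, i⟩ ⟨⟨hc0, hc1, hc2⟩, ⟨hts, htm, htc⟩, ⟨his, him, hic⟩⟩
    dsimp only at hc0 hc1 hc2 hts htm htc his him hic
    have hcval : c = l 1 - ν 1 := by omega
    have ht : t = rep a 2 (n - 1) := by
      refine (List.perm_iff_count.2 ?_).eq_of_pairwise' hts (rep_sorted a 2 (n-1))
      intro j
      rw [rep_count]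
      by_cases hj : 2 ≤ j ∧ j < 2 + (n - 1)
      · rw [if_pos hj]
        have h := htc j hj.1 (by omega)
        have h' := hacast j hj.1 (by omega)
        have : (List.count j t : ℤ) = (a j : ℤ) := by rw [h']; omega
        exact_mod_cast this
      · rw [if_neg hj]
        rw [List.count_eq_zero]
        intro hmem
        have := htm j hmem; omega
    have hi : i = (rep b 1 (n - 1)).reverse := by
      refine (List.perm_iff_count.2 ?_).eq_of_pairwise' his ?_
      · intro j
        rw [List.count_reverse, rep_count]
        by_cases hj : 1 ≤ j ∧ j < 1 + (n - 1)
        · rw [if_pos hj]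
          have h := hic (j+1) (by omega) (by omega)
          have h' := hbcast j hj.1 (by omega)
          simp only [Nat.add_sub_cancel] at h
          have : (List.count j i : ℤ) = (b j : ℤ) := by rw [h']; omega
          exact_mod_cast this
        · rw [if_neg hj]
          rw [List.count_eq_zero]
          intro hmem
          have := him j hmem; omega
      · rw [List.pairwise_reverse]
        exact rep_sorted b 1 (n-1)
    simp [Prod.ext_iff, hcval, ht, hi]
end
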